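/- arXiv:1712.08423 — 2 statements merged into one kernel-verified Lean document; each statement's English description precedes it below -/
import Mathlib

section
/- The largest eigenvalue of the Hermitian matrix ρ_{Φ⁺,Ω} is λ_max(ρ_{Φ⁺,Ω}) = (1 + Σ_{i=1}^{d-1} x_i²)/d. -/
open Matrix Kronecker BigOperators Finset

noncomputable section

/-- The maximally entangled state `|Φ⁺⟩ = (1/√d) Σᵢ |i⟩⊗|i⟩`. -/
def phiPlus (d : ℕ) : Fin d × Fin d → ℂ :=
  fun p => if p.1 = p.2 then ((Real.sqrt d)⁻¹ : ℝ) else 0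

/-- Kraus operators of the channel Ω. -/
def krausA (d : ℕ) [NeZero d] (x : Fin d → ℝ) : Fin d → Matrix (Fin d) (Fin d) ℂ :=
  fun m => if m = 0 then Matrix.diagonal (fun i => (x i : ℂ))
    else Matrix.of (fun i j => if i = 0 ∧ j = m then ((Real.sqrt (1 - (x m) ^ 2) : ℝ) : ℂ) else 0)

/-- The output state `ρ_{ψ,Λ} = Σₘ (I ⊗ Kₘ)|ψ⟩⟨ψ|(I ⊗ Kₘ†)`. -/
def outChannel (d : ℕ) {ι : Type*} [Fintype ι] (K : ι → Matrix (Fin d) (Fin d) ℂ)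
    (ψ : Fin d × Fin d → ℂ) : Matrix (Fin d × Fin d) (Fin d × Fin d) ℂ :=
  ∑ m, ((1 : Matrix (Fin d) (Fin d) ℂ) ⊗ₖ K m) * Matrix.vecMulVec ψ (star ψ) *
    ((1 : Matrix (Fin d) (Fin d) ℂ) ⊗ₖ (K m)ᴴ)

end

lemma mul_vecMulVec_mul {n : Type*} [Fintype n] (M N : Matrix n n ℂ) (v w : n → ℂ) :
    M * vecMulVec v w * N = vecMulVec (M *ᵥ v) (w ᵥ* N) := by
  ext p q
  simp only [mul_apply, vecMulVec_apply, mulVec, vecMul, dotProduct, Finset.sum_mul,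
    Finset.mul_sum]
  refine Finset.sum_congr rfl fun a _ => Finset.sum_congr rfl fun b _ => by ring

lemma kron_conjTranspose {d : ℕ} (K : Matrix (Fin d) (Fin d) ℂ) :
    ((1 : Matrix (Fin d) (Fin d) ℂ) ⊗ₖ Kᴴ) = ((1 : Matrix (Fin d) (Fin d) ℂ) ⊗ₖ K)ᴴ := by
  ext p q
  by_cases h : p.1 = q.1 <;> simp [conjTranspose_apply, one_apply, h, eq_comm]

lemma kron_mulVec_phi {d : ℕ} (K : Matrix (Fin d) (Fin d) ℂ) (p : Fin d × Fin d) :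
    (((1 : Matrix (Fin d) (Fin d) ℂ) ⊗ₖ K) *ᵥ phiPlus d) p
      = ((Real.sqrt d)⁻¹ : ℝ) * K p.2 p.1 := by
  simp only [mulVec, dotProduct, Fintype.sum_prod_type, kroneckerMap_apply, one_apply, phiPlus,
    ite_mul, mul_ite, zero_mul, mul_zero, one_mul, Finset.sum_ite_eq, Finset.sum_ite_eq',
    Finset.mem_univ, if_true]
  rw [mul_comm]

lemma outChannel_apply {d : ℕ} [NeZero d] (x : Fin d → ℝ) (p q : Fin d × Fin d) :
    outChannel d (krausA d x) (phiPlus d) p q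
      = (d : ℂ)⁻¹ * ∑ m, krausA d x m p.2 p.1 * star (krausA d x m q.2 q.1) := by
  have hsq : ((Real.sqrt d : ℝ) : ℂ)⁻¹ * ((Real.sqrt d : ℝ) : ℂ)⁻¹ = (d : ℂ)⁻¹ := by
    rw [← mul_inv, ← Complex.ofReal_mul, Real.mul_self_sqrt (Nat.cast_nonneg d),
      Complex.ofReal_natCast]
  simp only [outChannel, Matrix.sum_apply]
  rw [Finset.mul_sum]
  refine Finset.sum_congr rfl fun m _ => ?_
  rw [kron_conjTranspose, mul_vecMulVec_mul, ← star_mulVec, vecMulVec_apply, kron_mulVec_phi,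
    Pi.star_apply, kron_mulVec_phi]
  simp only [star_mul', Complex.star_def, Complex.conj_ofReal]
  push_cast [Complex.ofReal_inv]
  rw [← hsq]; ring

lemma kraus_sum {d : ℕ} [NeZero d] (x : Fin d → ℝ)
    (hx : ∀ i : Fin d, i ≠ 0 → 0 < x i ∧ x i < 1) (p q : Fin d × Fin d) :
    ∑ m, krausA d x m p.2 p.1 * star (krausA d x m q.2 q.1)
      = (if p.2 = p.1 ∧ q.2 = q.1 then ((x p.1 : ℂ) * (x q.1 : ℂ)) else 0)
        + (if p.1 = q.1 ∧ p.1 ≠ 0 ∧ p.2 = 0 ∧ q.2 = 0 then ((1 : ℂ) - (x p.1 : ℂ)^2)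
          else 0) := by
  rw [Fintype.sum_eq_add_sum_compl 0]
  congr 1
  · simp only [krausA, if_pos rfl, Matrix.diagonal_apply]
    by_cases h1 : p.2 = p.1 <;> by_cases h2 : q.2 = q.1 <;>
      simp [h1, h2, Complex.star_def, Complex.conj_ofReal]
  · by_cases hC : p.1 = q.1 ∧ p.1 ≠ 0 ∧ p.2 = 0 ∧ q.2 = 0
    · obtain ⟨h1, h2, h3, h4⟩ := hC
      rw [if_pos ⟨h1, h2, h3, h4⟩]
      rw [Finset.sum_eq_single_of_mem p.1 (by simpa using h2)]
      · have hnn : (0:ℝ) ≤ 1 - x p.1 ^ 2 := by nlinarith [(hx p.1 h2).1, (hx p.1 h2).2]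
        simp only [krausA, if_neg h2, Matrix.of_apply]
        rw [if_pos ⟨h3, trivial⟩, if_pos (show q.2 = 0 ∧ q.1 = p.1 from ⟨h4, h1.symm⟩)]
        rw [Complex.star_def, Complex.conj_ofReal, ← Complex.ofReal_mul,
          Real.mul_self_sqrt hnn]
        push_cast; ring
      · intro m hm hne
        have hm0 : m ≠ 0 := by simpa using hm
        simp only [krausA, if_neg hm0, Matrix.of_apply]
        rw [if_neg (show ¬(p.2 = 0 ∧ p.1 = m) from fun hc => hne hc.2.symm)]
        simp
    · rw [if_neg hC]
      refine Finset.sum_eq_zero fun m hm => ?_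
      have hm0 : m ≠ 0 := by simpa using hm
      simp only [krausA, if_neg hm0, Matrix.of_apply]
      by_cases h1 : p.2 = 0 ∧ p.1 = m
      · by_cases h2 : q.2 = 0 ∧ q.1 = m
        · exact absurd ⟨h1.2.trans h2.2.symm, h1.2 ▸ hm0, h1.1, h2.1⟩ hC
        · rw [if_neg h2]; simp
      · rw [if_neg h1]; simp

/-- the rank-one vector -/
noncomputable def vVec (d : ℕ) [NeZero d] (x : Fin d → ℝ) : Fin d × Fin d → ℂ :=
  fun p => if p.1 = p.2 then (x p.1 : ℂ) else 0

/-- the diagonal part -/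
noncomputable def gVec (d : ℕ) [NeZero d] (x : Fin d → ℝ) : Fin d × Fin d → ℝ :=
  fun p => if p.1 ≠ 0 ∧ p.2 = 0 then 1 - x p.1 ^ 2 else 0

lemma rho_decomp {d : ℕ} [NeZero d] (x : Fin d → ℝ)
    (hx : ∀ i : Fin d, i ≠ 0 → 0 < x i ∧ x i < 1) :
    outChannel d (krausA d x) (phiPlus d)
      = (d : ℂ)⁻¹ • (vecMulVec (vVec d x) (star (vVec d x))
          + Matrix.diagonal (fun p => ((gVec d x p : ℝ) : ℂ))) := by
  ext p q
  rw [outChannel_apply x p q, kraus_sum x hx p q]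
  simp only [Matrix.smul_apply, Matrix.add_apply, vecMulVec_apply, Pi.star_apply,
    Matrix.diagonal_apply, smul_eq_mul]
  congr 1
  congr 1
  · by_cases h1 : p.1 = p.2 <;> by_cases h2 : q.1 = q.2 <;>
      simp [vVec, h1, h2, Complex.star_def, Complex.conj_ofReal, And.comm, eq_comm]
  · by_cases hpq : p = q
    · subst hpq
      rw [if_pos rfl]
      by_cases h : p.1 ≠ 0 ∧ p.2 = 0
      · rw [if_pos ⟨rfl, h.1, h.2, h.2⟩]
        simp only [gVec, if_pos h]; push_cast; ring
      · rw [if_neg (fun hc => h ⟨hc.2.1, hc.2.2.1⟩)]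
        simp only [gVec, if_neg h]; simp
    · rw [if_neg hpq]
      rw [if_neg (fun hc => hpq (Prod.ext hc.1 (hc.2.2.1.trans hc.2.2.2.symm)))]

lemma vecMulVec_mulVec' {n : Type*} [Fintype n] (a b u : n → ℂ) :
    vecMulVec a b *ᵥ u = (b ⬝ᵥ u) • a := by
  ext p
  simp only [mulVec, vecMulVec_apply, dotProduct, Pi.smul_apply, smul_eq_mul, Finset.sum_mul,
    Finset.mul_sum]
  exact Finset.sum_congr rfl fun i _ => by ring

lemma star_v_dot_v {d : ℕ} [NeZero d] (x : Fin d → ℝ) (hx0 : x 0 = 1) :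
    star (vVec d x) ⬝ᵥ vVec d x
      = (((1 + ∑ i ∈ Finset.univ.erase (0 : Fin d), x i ^ 2 : ℝ)) : ℂ) := by
  have : ∀ i : Fin d, (starRingEnd ℂ) ((x i : ℂ)) * (x i : ℂ) = ((x i ^ 2 : ℝ) : ℂ) := by
    intro i; rw [Complex.conj_ofReal]; push_cast; ring
  simp only [dotProduct, vVec, Pi.star_apply, Fintype.sum_prod_type, apply_ite, star_zero,
    Complex.star_def, ite_mul, zero_mul, mul_ite, mul_zero, Finset.sum_ite_eq,
    Finset.mem_univ, if_true, this]
  rw [← Finset.add_sum_erase Finset.univ _ (Finset.mem_univ (0 : Fin d)), hx0]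
  push_cast
  ring

lemma g_mul_v {d : ℕ} [NeZero d] (x : Fin d → ℝ) (p : Fin d × Fin d) :
    ((gVec d x p : ℝ) : ℂ) * vVec d x p = 0 := by
  by_cases h : p.1 ≠ 0 ∧ p.2 = 0
  · have : ¬ p.1 = p.2 := fun hc => h.1 (hc.trans h.2)
    simp [vVec, this]
  · simp [gVec, h]

lemma rho_mulVec_v {d : ℕ} [NeZero d] (x : Fin d → ℝ) (hx0 : x 0 = 1)
    (hx : ∀ i : Fin d, i ≠ 0 → 0 < x i ∧ x i < 1) :
    outChannel d (krausA d x) (phiPlus d) *ᵥ vVec d x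
      = ((((1 + ∑ i ∈ Finset.univ.erase (0 : Fin d), x i ^ 2) / d : ℝ)) : ℂ) • vVec d x := by
  rw [rho_decomp x hx, smul_mulVec, add_mulVec, vecMulVec_mulVec', star_v_dot_v x hx0]
  have hdiag : Matrix.diagonal (fun p => ((gVec d x p : ℝ) : ℂ)) *ᵥ vVec d x = 0 := by
    ext p; rw [mulVec_diagonal]; exact g_mul_v x p
  rw [hdiag, add_zero, smul_smul]
  congr 1
  push_cast
  ring

lemma exists_eig {d : ℕ} [NeZero d] (x : Fin d → ℝ) (hx0 : x 0 = 1)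
    (hx : ∀ i : Fin d, i ≠ 0 → 0 < x i ∧ x i < 1)
    (hH : (outChannel d (krausA d x) (phiPlus d)).IsHermitian) :
    ∃ q, hH.eigenvalues q
      = (1 + ∑ i ∈ Finset.univ.erase (0 : Fin d), x i ^ 2) / d := by
  set lam : ℝ := (1 + ∑ i ∈ Finset.univ.erase (0 : Fin d), x i ^ 2) / d with hlam
  set U : Matrix (Fin d × Fin d) (Fin d × Fin d) ℂ := (Matrix.IsHermitian.eigenvectorUnitary hH : Matrix (Fin d × Fin d) (Fin d × Fin d) ℂ)
    with hU
  set D : Matrix (Fin d × Fin d) (Fin d × Fin d) ℂ :=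
    Matrix.diagonal (RCLike.ofReal ∘ hH.eigenvalues) with hD
  have hUU : U * star U = 1 := (Matrix.mem_unitaryGroup_iff).mp hH.eigenvectorUnitary.2
  have hUU' : star U * U = 1 := (Matrix.mem_unitaryGroup_iff').mp hH.eigenvectorUnitary.2
  have hv0 : vVec d x ≠ 0 := by
    intro h
    have := congrFun h (0, 0)
    simp [vVec, hx0] at this
  set w : Fin d × Fin d → ℂ := star U *ᵥ vVec d x with hw
  have hwne : w ≠ 0 := by
    intro h
    apply hv0
    have : U *ᵥ w = 0 := by rw [h, mulVec_zero]
    rwa [hw, mulVec_mulVec, hUU, one_mulVec] at this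
  have hDw : D *ᵥ w = ((lam : ℝ) : ℂ) • w := by
    have hspec := hH.spectral_theorem
    calc D *ᵥ w = (D * star U) *ᵥ vVec d x := by rw [hw, mulVec_mulVec]
    _ = (star U * (U * D * star U)) *ᵥ vVec d x := by
        rw [mul_assoc U D (star U), ← mul_assoc (star U) U _, hUU', one_mul]
    _ = star U *ᵥ (outChannel d (krausA d x) (phiPlus d) *ᵥ vVec d x) := by
        rw [hspec, Unitary.conjStarAlgAut_apply, mulVec_mulVec]
    _ = ((lam : ℝ) : ℂ) • w := by rw [rho_mulVec_v x hx0 hx, mulVec_smul]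
  obtain ⟨q, hq⟩ := Function.ne_iff.mp hwne
  refine ⟨q, ?_⟩
  have := congrFun hDw q
  rw [mulVec_diagonal] at this
  have h2 : ((hH.eigenvalues q : ℝ) : ℂ) * w q = ((lam : ℝ) : ℂ) * w q := this
  have h3 := mul_right_cancel₀ hq h2
  exact_mod_cast h3

lemma sum_abs_v_sq {d : ℕ} [NeZero d] (x : Fin d → ℝ) (hx0 : x 0 = 1) :
    ∑ p : Fin d × Fin d, ‖vVec d x p‖ ^ 2
      = 1 + ∑ i ∈ Finset.univ.erase (0 : Fin d), x i ^ 2 := by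
  simp only [vVec, Fintype.sum_prod_type, apply_ite (fun z : ℂ => ‖z‖), norm_zero, Complex.norm_real, Real.norm_eq_abs,
    ite_pow, zero_pow, sq_abs, Finset.sum_ite_eq, Finset.mem_univ, if_true, two_ne_zero,
    ne_eq, not_false_iff]
  rw [← Finset.add_sum_erase Finset.univ _ (Finset.mem_univ (0 : Fin d)), hx0, one_pow]

lemma eig_le {d : ℕ} [NeZero d] (x : Fin d → ℝ) (hx0 : x 0 = 1)
    (hx : ∀ i : Fin d, i ≠ 0 → 0 < x i ∧ x i < 1)
    (hH : (outChannel d (krausA d x) (phiPlus d)).IsHermitian) (j : Fin d × Fin d) :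
    hH.eigenvalues j ≤ (1 + ∑ i ∈ Finset.univ.erase (0 : Fin d), x i ^ 2) / d := by
  classical
  set S : ℝ := ∑ i ∈ Finset.univ.erase (0 : Fin d), x i ^ 2 with hS
  have hS0 : 0 ≤ S := Finset.sum_nonneg fun i _ => sq_nonneg _
  have hdpos : (0:ℝ) < d := Nat.cast_pos.mpr (Nat.pos_of_ne_zero (NeZero.ne d))
  set u : Fin d × Fin d → ℂ := ⇑(hH.eigenvectorBasis j) with hu
  have hnorm : ∑ p, ‖u p‖ ^ 2 = 1 := by
    have h1 : ‖hH.eigenvectorBasis j‖ = 1 := hH.eigenvectorBasis.orthonormal.1 j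
    rw [EuclideanSpace.norm_eq] at h1
    have h0 : (0:ℝ) ≤ ∑ p, ‖hH.eigenvectorBasis j p‖ ^ 2 :=
      Finset.sum_nonneg fun p _ => sq_nonneg _
    have h2 : ∑ p, ‖hH.eigenvectorBasis j p‖ ^ 2 = 1 := by nlinarith [Real.sq_sqrt h0]
    simpa [hu] using h2
  set a : ℂ := star (vVec d x) ⬝ᵥ u with ha
  set c : Fin d × Fin d → ℝ := fun p => if vVec d x p = 0 then 0 else ‖u p‖ with hc
  have hmv : outChannel d (krausA d x) (phiPlus d) *ᵥ u
      = (d : ℂ)⁻¹ • ((star (vVec d x) ⬝ᵥ u) • vVec d x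
          + Matrix.diagonal (fun p => ((gVec d x p : ℝ) : ℂ)) *ᵥ u) := by
    rw [rho_decomp x hx, smul_mulVec, add_mulVec, vecMulVec_mulVec']
  have hd1 : star u ⬝ᵥ ((star (vVec d x) ⬝ᵥ u) • vVec d x) = ((Complex.normSq a : ℝ) : ℂ) := by
    have hb : star (vVec d x) ⬝ᵥ u = star (star u ⬝ᵥ vVec d x) := star_dotProduct _ _
    rw [dotProduct_smul, smul_eq_mul, ha, hb, Complex.star_def, Complex.normSq_conj,
      mul_comm ((starRingEnd ℂ) (star u ⬝ᵥ vVec d x)) (star u ⬝ᵥ vVec d x), Complex.mul_conj]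
  have hd2 : star u ⬝ᵥ (Matrix.diagonal (fun p => ((gVec d x p : ℝ) : ℂ)) *ᵥ u)
      = ((∑ p, gVec d x p * Complex.normSq (u p) : ℝ) : ℂ) := by
    push_cast
    simp only [dotProduct, Pi.star_apply, mulVec_diagonal]
    refine Finset.sum_congr rfl fun p _ => ?_
    rw [Complex.star_def, mul_left_comm, mul_comm ((starRingEnd ℂ) (u p)) (u p),
      Complex.mul_conj]
  have hz : hH.eigenvalues j = (d : ℝ)⁻¹ * (Complex.normSq a
      + ∑ p, gVec d x p * Complex.normSq (u p)) := by
    rw [hH.eigenvalues_eq, ← hu, hmv, dotProduct_smul, dotProduct_add, hd1, hd2, smul_eq_mul]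
    have hcast : ((d : ℂ))⁻¹ = (((d : ℝ)⁻¹ : ℝ) : ℂ) := by push_cast; ring
    rw [hcast, ← Complex.ofReal_add, ← Complex.ofReal_mul]
    exact RCLike.ofReal_re _
  rw [hz]
  have key : Complex.normSq a + ∑ p, gVec d x p * Complex.normSq (u p) ≤ 1 + S := by
    have habs : ‖a‖ ≤ ∑ p, ‖vVec d x p‖ * c p := by
      refine le_trans (norm_sum_le _ _) (Finset.sum_le_sum fun p _ => ?_)
      rw [norm_mul]
      by_cases h : vVec d x p = 0
      · simp [hc, h]
      · simp [hc, h, Complex.norm_conj, le_refl]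
    have hCS : Complex.normSq a ≤ (1 + S) * ∑ p, c p ^ 2 := by
      have h1 : Complex.normSq a = ‖a‖ ^ 2 := (Complex.sq_norm a).symm
      have h2 : ‖a‖ ^ 2 ≤ (∑ p, ‖vVec d x p‖ * c p) ^ 2 := by
        have hc0 : 0 ≤ ∑ p, ‖vVec d x p‖ * c p :=
          Finset.sum_nonneg fun p _ => mul_nonneg (norm_nonneg _)
            (by by_cases h : vVec d x p = 0 <;> simp [hc, h, norm_nonneg])
        exact pow_le_pow_left₀ (norm_nonneg a) habs 2
      have h3 := Finset.sum_mul_sq_le_sq_mul_sq Finset.univ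
        (fun p => ‖vVec d x p‖) c
      rw [sum_abs_v_sq x hx0] at h3
      exact h1 ▸ (h2.trans h3)
    have hg : ∑ p, gVec d x p * Complex.normSq (u p)
        ≤ (1 + S) * ∑ p, (if vVec d x p = 0 then Complex.normSq (u p) else 0) := by
      rw [Finset.mul_sum]
      refine Finset.sum_le_sum fun p _ => ?_
      by_cases h : vVec d x p = 0
      · rw [if_pos h]
        have hg1 : gVec d x p ≤ 1 := by
          by_cases h2 : p.1 ≠ 0 ∧ p.2 = 0
          · simp only [gVec, if_pos h2]; nlinarith [(hx p.1 h2.1).1]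
          · simp only [gVec, if_neg h2]; norm_num
        have hg0 : 0 ≤ Complex.normSq (u p) := Complex.normSq_nonneg _
        nlinarith
      · rw [if_neg h]
        have : gVec d x p = 0 := by
          have hpp : p.1 = p.2 := by
            by_contra hne
            exact h (by simp [vVec, hne])
          have : ¬(p.1 ≠ 0 ∧ p.2 = 0) := fun h2 => h2.1 (hpp.trans h2.2)
          simp [gVec, this]
        simp [this]
    have hsplit : (∑ p, c p ^ 2)
        + (∑ p, (if vVec d x p = 0 then Complex.normSq (u p) else 0)) = 1 := by
      rw [← Finset.sum_add_distrib, ← hnorm]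
      refine Finset.sum_congr rfl fun p _ => ?_
      by_cases h : vVec d x p = 0
      · simp [hc, h, Complex.sq_norm]
      · simp [hc, h]
    nlinarith [hCS, hg, hsplit, Finset.sum_nonneg (s := (Finset.univ : Finset (Fin d × Fin d)))
      (f := fun p => c p ^ 2) (fun p _ => sq_nonneg _)]
  rw [div_eq_inv_mul]
  exact mul_le_mul_of_nonneg_left key (by positivity)

/-- the largest eigenvalue of the Hermitian matrix `ρ_{Φ⁺,Ω}` is
`(1 + Σ_{i=1}^{d-1} xᵢ²)/d`. -/
theorem largest_eigenvalue_output (d : ℕ) [NeZero d] (hd : 3 ≤ d) (x : Fin d → ℝ)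
    (hx0 : x 0 = 1) (hx : ∀ i : Fin d, i ≠ 0 → 0 < x i ∧ x i < 1)
    (hH : (outChannel d (krausA d x) (phiPlus d)).IsHermitian) :
    (⨆ p : Fin d × Fin d, hH.eigenvalues p)
      = (1 + ∑ i ∈ Finset.univ.erase (0 : Fin d), (x i) ^ 2) / d := by
  refine le_antisymm (ciSup_le fun p => eig_le x hx0 hx hH p) ?_
  obtain ⟨q, hq⟩ := exists_eig x hx0 hx hH
  rw [← hq]
  exact le_ciSup (Set.Finite.bddAbove (Set.finite_range _)) q
end

section
/- (Lemma 4, quantitative form) For the unit vector |ψ'⟩ = (|00⟩ + Σ_{i=1}^{d-1} x_i |ii⟩)/√(1 + Σ_{i=1}^{d-1} x_i²), the singlet fraction of ρ_{ψ',Ω} equals the largest eigenvalue of ρ_{Φ⁺,Ω}: sup over d×d unitaries W of ⟨(W ⊗ I)Φ⁺| ρ_{ψ',Ω} |(W ⊗ I)Φ⁺⟩ = (1 + Σ_{i=1}^{d-1} x_i²)/d, and the supremum is attained. -/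
open Matrix Kronecker BigOperators Finset

noncomputable section

/-- Standard basis vector `|i⟩⊗|j⟩` of `ℂ^d ⊗ ℂ^d`. -/
def stdVec (d : ℕ) (i j : Fin d) : Fin d × Fin d → ℂ := fun p => if p = (i, j) then 1 else 0

/-- The nonmaximally entangled input state
`|ψ'⟩ = (|00⟩ + Σ_{i≠0} xᵢ|ii⟩)/√(1 + Σ_{i≠0} xᵢ²)`. -/
def psiPrime (d : ℕ) [NeZero d] (x : Fin d → ℝ) : Fin d × Fin d → ℂ :=
  ((Real.sqrt (1 + ∑ i ∈ Finset.univ.erase (0 : Fin d), (x i) ^ 2) : ℝ) : ℂ)⁻¹ •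
    (stdVec d 0 0 + ∑ i ∈ Finset.univ.erase (0 : Fin d), (x i : ℂ) • stdVec d i i)

end

section auxLemmas

open Complex

lemma vecMulVec_mulVec'_s12 {n : Type*} [Fintype n] (ψ w : n → ℂ) :
    (Matrix.vecMulVec ψ (star ψ)).mulVec w = (star ψ ⬝ᵥ w) • ψ := by
  funext i
  simp [Matrix.mulVec, dotProduct, Matrix.vecMulVec_apply, Finset.sum_mul,
    Finset.mul_sum, mul_comm, mul_left_comm]

lemma quad_form {n : Type*} [Fintype n] (A : Matrix n n ℂ) (ψ u : n → ℂ) :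
    star u ⬝ᵥ (A * Matrix.vecMulVec ψ (star ψ) * Aᴴ).mulVec u
      = (Complex.normSq (star u ⬝ᵥ A.mulVec ψ) : ℂ) := by
  rw [← Matrix.mulVec_mulVec, ← Matrix.mulVec_mulVec, vecMulVec_mulVec'_s12,
    Matrix.mulVec_smul, dotProduct_smul, smul_eq_mul]
  have h : star ψ ⬝ᵥ Aᴴ.mulVec u = star (star u ⬝ᵥ A.mulVec ψ) := by
    rw [Matrix.star_dotProduct, Matrix.star_mulVec, Matrix.conjTranspose_conjTranspose]
    rw [← Matrix.dotProduct_mulVec]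
  rw [h, Complex.star_def, mul_comm, Complex.mul_conj]

lemma kron_phiPlus_apply (d : ℕ) (W : Matrix (Fin d) (Fin d) ℂ) (p : Fin d × Fin d) :
    ((W ⊗ₖ (1 : Matrix (Fin d) (Fin d) ℂ)).mulVec (phiPlus d)) p
      = W p.1 p.2 * (((Real.sqrt d)⁻¹ : ℝ) : ℂ) := by
  obtain ⟨i, j⟩ := p
  simp [Matrix.mulVec, dotProduct, phiPlus, Fintype.sum_prod_type,
    Matrix.one_apply, ite_and, mul_ite, mul_comm]

lemma psiPrime_apply (d : ℕ) [NeZero d] (x : Fin d → ℝ) (hx0 : x 0 = 1) (p : Fin d × Fin d) :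
    psiPrime d x p
      = (((Real.sqrt (1 + ∑ i ∈ Finset.univ.erase (0 : Fin d), (x i) ^ 2)) : ℝ) : ℂ)⁻¹ *
        (if p.1 = p.2 then ((x p.1 : ℝ) : ℂ) else 0) := by
  obtain ⟨a, b⟩ := p
  simp only [psiPrime, Pi.smul_apply, smul_eq_mul, Pi.add_apply, Finset.sum_apply, stdVec]
  congr 1
  by_cases hab : a = b
  · subst hab
    by_cases ha : a = 0
    · subst ha
      rw [if_pos rfl, hx0]
      simp [Prod.ext_iff]
    · rw [if_neg (by simp [Prod.ext_iff, ha]), if_pos rfl]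
      rw [Finset.sum_eq_single a]
      · simp
      · intro c hc hca; simp [Prod.ext_iff, Ne.symm hca]
      · intro h; exact absurd (Finset.mem_erase.mpr ⟨ha, Finset.mem_univ a⟩) h
  · rw [if_neg hab, if_neg (by simp [Prod.ext_iff]; rintro rfl rfl; exact hab rfl)]
    rw [Finset.sum_eq_zero, add_zero]
    intro c hc
    simp only [Prod.ext_iff]
    rw [if_neg, mul_zero]
    rintro ⟨rfl, rfl⟩; exact hab rfl

lemma v_zero_apply (d : ℕ) [NeZero d] (x : Fin d → ℝ) (hx0 : x 0 = 1) (p : Fin d × Fin d) :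
    (((1 : Matrix (Fin d) (Fin d) ℂ) ⊗ₖ krausA d x 0).mulVec (psiPrime d x)) p
    = (((Real.sqrt (1 + ∑ i ∈ Finset.univ.erase (0 : Fin d), (x i) ^ 2)) : ℝ) : ℂ)⁻¹ *
      (if p.1 = p.2 then ((x p.1 : ℝ) : ℂ) ^ 2 else 0) := by
  obtain ⟨i, j⟩ := p
  simp only [Matrix.mulVec, dotProduct, Fintype.sum_prod_type,
    Matrix.kroneckerMap_apply, Matrix.one_apply, krausA, if_pos rfl,
    Matrix.diagonal_apply, psiPrime_apply d x hx0]
  simp only [mul_ite, ite_mul, zero_mul, mul_zero, Finset.sum_ite_eq, Finset.sum_ite_eq',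
    Finset.mem_univ, if_true]
  by_cases hij : i = j
  · subst hij; simp; ring
  · simp [hij, Ne.symm hij]

lemma v_m_apply (d : ℕ) [NeZero d] (x : Fin d → ℝ) (hx0 : x 0 = 1) (m : Fin d) (hm : m ≠ 0)
    (p : Fin d × Fin d) :
    (((1 : Matrix (Fin d) (Fin d) ℂ) ⊗ₖ krausA d x m).mulVec (psiPrime d x)) p
    = (((Real.sqrt (1 + ∑ i ∈ Finset.univ.erase (0 : Fin d), (x i) ^ 2)) : ℝ) : ℂ)⁻¹ *
      (if p = (m, 0) then ((Real.sqrt (1 - (x m) ^ 2) : ℝ) : ℂ) * ((x m : ℝ) : ℂ) else 0) := by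
  obtain ⟨i, j⟩ := p
  simp only [Matrix.mulVec, dotProduct, Fintype.sum_prod_type,
    Matrix.kroneckerMap_apply, Matrix.one_apply, krausA, if_neg hm, Matrix.of_apply,
    psiPrime_apply d x hx0, ite_and]
  simp only [mul_ite, ite_mul, zero_mul, mul_zero, Finset.sum_ite_eq, Finset.sum_ite_eq',
    Finset.mem_univ, if_true, Prod.mk.injEq]
  by_cases hj : j = 0
  · subst hj
    by_cases him : i = m
    · subst him; simp; ring
    · simp [him, Ne.symm him]
  · simp [hj, Ne.symm hj]

lemma z_zero (d : ℕ) [NeZero d] (x : Fin d → ℝ) (hx0 : x 0 = 1)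
    (W : Matrix (Fin d) (Fin d) ℂ) :
    star ((W ⊗ₖ (1 : Matrix (Fin d) (Fin d) ℂ)).mulVec (phiPlus d)) ⬝ᵥ
      (((1 : Matrix (Fin d) (Fin d) ℂ) ⊗ₖ krausA d x 0).mulVec (psiPrime d x))
    = (((Real.sqrt d)⁻¹ : ℝ) : ℂ) *
      (((Real.sqrt (1 + ∑ i ∈ Finset.univ.erase (0 : Fin d), (x i) ^ 2)) : ℝ) : ℂ)⁻¹ *
      ∑ i, (starRingEnd ℂ) (W i i) * ((x i : ℝ) : ℂ) ^ 2 := by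
  simp only [dotProduct, Pi.star_apply, kron_phiPlus_apply, v_zero_apply d x hx0,
    Fintype.sum_prod_type, star_mul', Complex.star_def, Complex.conj_ofReal]
  simp only [mul_ite, ite_mul, zero_mul, mul_zero, Finset.sum_ite_eq, Finset.sum_ite_eq',
    Finset.mem_univ, if_true]
  rw [Finset.mul_sum]
  exact Finset.sum_congr rfl fun i _ => by ring

lemma z_m (d : ℕ) [NeZero d] (x : Fin d → ℝ) (hx0 : x 0 = 1) (m : Fin d) (hm : m ≠ 0)
    (W : Matrix (Fin d) (Fin d) ℂ) :
    star ((W ⊗ₖ (1 : Matrix (Fin d) (Fin d) ℂ)).mulVec (phiPlus d)) ⬝ᵥ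
      (((1 : Matrix (Fin d) (Fin d) ℂ) ⊗ₖ krausA d x m).mulVec (psiPrime d x))
    = (((Real.sqrt d)⁻¹ : ℝ) : ℂ) *
      (((Real.sqrt (1 + ∑ i ∈ Finset.univ.erase (0 : Fin d), (x i) ^ 2)) : ℝ) : ℂ)⁻¹ *
      ((starRingEnd ℂ) (W m 0) * ((Real.sqrt (1 - (x m) ^ 2) : ℝ) : ℂ) * ((x m : ℝ) : ℂ)) := by
  simp only [dotProduct, Pi.star_apply, kron_phiPlus_apply, v_m_apply d x hx0 m hm,
    star_mul', Complex.star_def, Complex.conj_ofReal]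
  rw [Finset.sum_eq_single ((m, 0) : Fin d × Fin d)]
  · simp; ring
  · intro b _ hb; simp [hb]
  · simp

lemma dot_sum_mulVec {n ι : Type*} [Fintype n] [Fintype ι] (M : ι → Matrix n n ℂ)
    (u v : n → ℂ) : u ⬝ᵥ (∑ m, M m).mulVec v = ∑ m, u ⬝ᵥ (M m).mulVec v := by
  have h1 : (∑ m, M m).mulVec v = ∑ m, (M m).mulVec v := by
    funext i
    simp only [Matrix.mulVec, dotProduct, Matrix.sum_apply, Finset.sum_apply,
      Finset.sum_mul]
    exact Finset.sum_comm
  rw [h1]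
  simp only [dotProduct, Finset.sum_apply, Finset.mul_sum]
  exact Finset.sum_comm

lemma value_eq (d : ℕ) [NeZero d] (x : Fin d → ℝ) (hx0 : x 0 = 1)
    (hx : ∀ i : Fin d, i ≠ 0 → 0 < x i ∧ x i < 1) (W : Matrix (Fin d) (Fin d) ℂ) :
    (star ((W ⊗ₖ (1 : Matrix (Fin d) (Fin d) ℂ)).mulVec (phiPlus d)) ⬝ᵥ
       (outChannel d (krausA d x) (psiPrime d x)).mulVec
         ((W ⊗ₖ (1 : Matrix (Fin d) (Fin d) ℂ)).mulVec (phiPlus d))).re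
    = (Complex.normSq (∑ i, (starRingEnd ℂ) (W i i) * ((x i : ℝ) : ℂ) ^ 2)
        + ∑ m ∈ Finset.univ.erase (0 : Fin d),
            (x m) ^ 2 * (1 - (x m) ^ 2) * Complex.normSq (W m 0))
      / ((1 + ∑ i ∈ Finset.univ.erase (0 : Fin d), (x i) ^ 2) * d) := by
  have hd0 : (0:ℝ) < d := Nat.cast_pos.mpr (Nat.pos_of_ne_zero (NeZero.ne d))
  have hsum0 : (0:ℝ) ≤ ∑ i ∈ Finset.univ.erase (0 : Fin d), (x i) ^ 2 :=
    Finset.sum_nonneg fun i _ => sq_nonneg _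
  have hs0 : (0:ℝ) < 1 + ∑ i ∈ Finset.univ.erase (0 : Fin d), (x i) ^ 2 := by linarith
  have h1 : star ((W ⊗ₖ (1 : Matrix (Fin d) (Fin d) ℂ)).mulVec (phiPlus d)) ⬝ᵥ
       (outChannel d (krausA d x) (psiPrime d x)).mulVec
         ((W ⊗ₖ (1 : Matrix (Fin d) (Fin d) ℂ)).mulVec (phiPlus d))
      = ((∑ m, Complex.normSq
          (star ((W ⊗ₖ (1 : Matrix (Fin d) (Fin d) ℂ)).mulVec (phiPlus d)) ⬝ᵥ
            (((1 : Matrix (Fin d) (Fin d) ℂ) ⊗ₖ krausA d x m).mulVec (psiPrime d x))) : ℝ) : ℂ) := by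
    have hct : ∀ m : Fin d, ((1 : Matrix (Fin d) (Fin d) ℂ) ⊗ₖ (krausA d x m)ᴴ)
        = ((1 : Matrix (Fin d) (Fin d) ℂ) ⊗ₖ (krausA d x m))ᴴ := by
      intro m
      ext ⟨i, j⟩ ⟨k, l⟩
      simp only [Matrix.kroneckerMap_apply, Matrix.conjTranspose_apply, Matrix.one_apply,
        star_mul', eq_comm]
      by_cases h : i = k <;> simp [h]
    rw [outChannel]
    simp_rw [hct]
    rw [dot_sum_mulVec]
    push_cast
    exact Finset.sum_congr rfl fun m _ => quad_form _ _ _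
  rw [h1, Complex.ofReal_re]
  have hnormc : Complex.normSq ((((Real.sqrt d)⁻¹ : ℝ)) : ℂ) = (d:ℝ)⁻¹ := by
    rw [Complex.normSq_ofReal, ← mul_inv, Real.mul_self_sqrt hd0.le]
  have hnormN : Complex.normSq (((Real.sqrt
      (1 + ∑ i ∈ Finset.univ.erase (0 : Fin d), (x i) ^ 2) : ℝ) : ℂ)⁻¹)
      = (1 + ∑ i ∈ Finset.univ.erase (0 : Fin d), (x i) ^ 2)⁻¹ := by
    rw [Complex.normSq_inv, Complex.normSq_ofReal, Real.mul_self_sqrt hs0.le]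
  rw [← Finset.add_sum_erase _ _ (Finset.mem_univ (0 : Fin d))]
  rw [z_zero d x hx0 W]
  rw [Complex.normSq_mul, Complex.normSq_mul, hnormc, hnormN]
  have hB : ∀ m ∈ Finset.univ.erase (0 : Fin d), Complex.normSq
      (star ((W ⊗ₖ (1 : Matrix (Fin d) (Fin d) ℂ)).mulVec (phiPlus d)) ⬝ᵥ
        (((1 : Matrix (Fin d) (Fin d) ℂ) ⊗ₖ krausA d x m).mulVec (psiPrime d x)))
      = (d:ℝ)⁻¹ * (1 + ∑ i ∈ Finset.univ.erase (0 : Fin d), (x i) ^ 2)⁻¹ *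
        ((x m) ^ 2 * (1 - (x m) ^ 2) * Complex.normSq (W m 0)) := by
    intro m hm
    have hm0 : m ≠ 0 := (Finset.mem_erase.mp hm).1
    have hx2 : (0:ℝ) ≤ 1 - (x m) ^ 2 := by
      have h1 := (hx m hm0).2
      have h2 := (hx m hm0).1
      nlinarith
    rw [z_m d x hx0 m hm0 W]
    rw [Complex.normSq_mul, Complex.normSq_mul, hnormc, hnormN, Complex.normSq_mul,
      Complex.normSq_mul, Complex.normSq_conj, Complex.normSq_ofReal,
      Complex.normSq_ofReal, Real.mul_self_sqrt hx2]
    ring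
  rw [Finset.sum_congr rfl hB, ← Finset.mul_sum]
  field_simp

end auxLemmas

/-- Lemma 4, quantitative form: the singlet fraction of `ρ_{ψ',Ω}` — the
supremum over unitaries `W` of `⟨(W⊗I)Φ⁺| ρ_{ψ',Ω} |(W⊗I)Φ⁺⟩` — equals
`(1 + Σ_{i≠0} xᵢ²)/d`, and the supremum is attained. -/
theorem singlet_fraction_psiPrime (d : ℕ) [NeZero d] (hd : 3 ≤ d) (x : Fin d → ℝ)
    (hx0 : x 0 = 1) (hx : ∀ i : Fin d, i ≠ 0 → 0 < x i ∧ x i < 1) :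
    IsGreatest
      {r : ℝ | ∃ W ∈ Matrix.unitaryGroup (Fin d) ℂ,
        r = (star ((W ⊗ₖ (1 : Matrix (Fin d) (Fin d) ℂ)).mulVec (phiPlus d)) ⬝ᵥ
              (outChannel d (krausA d x) (psiPrime d x)).mulVec
                ((W ⊗ₖ (1 : Matrix (Fin d) (Fin d) ℂ)).mulVec (phiPlus d))).re}
      ((1 + ∑ i ∈ Finset.univ.erase (0 : Fin d), (x i) ^ 2) / d) := by
  have hd0 : (0:ℝ) < d := Nat.cast_pos.mpr (Nat.pos_of_ne_zero (NeZero.ne d))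
  have hsum0 : (0:ℝ) ≤ ∑ i ∈ Finset.univ.erase (0 : Fin d), (x i) ^ 2 :=
    Finset.sum_nonneg fun i _ => sq_nonneg _
  have hs0 : (0:ℝ) < 1 + ∑ i ∈ Finset.univ.erase (0 : Fin d), (x i) ^ 2 := by linarith
  have hsum : ∑ i, (x i) ^ 2 = 1 + ∑ i ∈ Finset.univ.erase (0 : Fin d), (x i) ^ 2 := by
    rw [← Finset.add_sum_erase _ _ (Finset.mem_univ (0 : Fin d)), hx0, one_pow]
  constructor
  · refine ⟨1, one_mem _, ?_⟩
    rw [value_eq d x hx0 hx 1]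
    have hS : (∑ i, (starRingEnd ℂ) ((1 : Matrix (Fin d) (Fin d) ℂ) i i) * ((x i : ℝ) : ℂ) ^ 2)
        = (((1 + ∑ i ∈ Finset.univ.erase (0 : Fin d), (x i) ^ 2 : ℝ)) : ℂ) := by
      rw [← hsum]
      push_cast
      exact Finset.sum_congr rfl fun i _ => by simp [Matrix.one_apply_eq]
    have hT : ∀ m ∈ Finset.univ.erase (0 : Fin d),
        (x m) ^ 2 * (1 - (x m) ^ 2) * Complex.normSq ((1 : Matrix (Fin d) (Fin d) ℂ) m 0) = 0 := by
      intro m hm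
      rw [Matrix.one_apply_ne (Finset.mem_erase.mp hm).1]
      simp
    rw [hS, Finset.sum_eq_zero hT, add_zero, Complex.normSq_ofReal]
    exact (mul_div_mul_left _ _ hs0.ne').symm
  · rintro r ⟨W, hW, rfl⟩
    rw [value_eq d x hx0 hx W]
    -- facts from unitarity
    have hrow : ∀ m : Fin d, ∑ j, Complex.normSq (W m j) = 1 := by
      intro m
      have h := Matrix.mem_unitaryGroup_iff.mp hW
      have h2 : (W * star W) m m = (1 : Matrix (Fin d) (Fin d) ℂ) m m := by rw [h]
      rw [Matrix.mul_apply, Matrix.one_apply_eq] at h2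
      have h3 : ∑ j, (Complex.normSq (W m j) : ℂ) = 1 := by
        rw [← h2]
        refine Finset.sum_congr rfl fun j _ => ?_
        rw [Matrix.star_apply, Complex.star_def, Complex.mul_conj]
      exact_mod_cast h3
    have hA1 : ∀ i : Fin d, Complex.normSq (W i i) ≤ 1 := by
      intro i
      rw [← hrow i]
      exact Finset.single_le_sum (fun j _ => Complex.normSq_nonneg _) (Finset.mem_univ i)
    have hpair : ∀ m : Fin d, m ≠ 0 →
        Complex.normSq (W m 0) + Complex.normSq (W m m) ≤ 1 := by
      intro m hm
      have h := Finset.sum_le_sum_of_subset_of_nonneg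
        (Finset.subset_univ ({0, m} : Finset (Fin d)))
        (f := fun j => Complex.normSq (W m j)) (fun j _ _ => Complex.normSq_nonneg _)
      rw [Finset.sum_pair (Ne.symm hm), hrow m] at h
      exact h
    -- Cauchy–Schwarz step
    set t := ∑ i ∈ Finset.univ.erase (0 : Fin d), (x i) ^ 2 with ht
    have hNS : Complex.normSq (∑ i, (starRingEnd ℂ) (W i i) * ((x i : ℝ) : ℂ) ^ 2)
        ≤ (1 + t) * ∑ i, Complex.normSq (W i i) * (x i) ^ 2 := by
      have habs : ‖∑ i, (starRingEnd ℂ) (W i i) * ((x i : ℝ) : ℂ) ^ 2‖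
          ≤ ∑ i, ‖W i i‖ * (x i) ^ 2 := by
        refine le_trans (norm_sum_le _ _) (le_of_eq ?_)
        refine Finset.sum_congr rfl fun i _ => ?_
        rw [norm_mul, Complex.norm_conj, norm_pow, Complex.norm_real, Real.norm_eq_abs, sq_abs]
      have hcs : (∑ i, x i * (‖W i i‖ * x i)) ^ 2
          ≤ (∑ i, (x i) ^ 2) * ∑ i, (‖W i i‖ * x i) ^ 2 :=
        Finset.sum_mul_sq_le_sq_mul_sq _ _ _
      have heq1 : ∑ i, x i * (‖W i i‖ * x i)
          = ∑ i, ‖W i i‖ * (x i) ^ 2 :=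
        Finset.sum_congr rfl fun i _ => by ring
      have heq2 : ∑ i, (‖W i i‖ * x i) ^ 2
          = ∑ i, Complex.normSq (W i i) * (x i) ^ 2 :=
        Finset.sum_congr rfl fun i _ => by rw [mul_pow, Complex.sq_norm]
      calc Complex.normSq (∑ i, (starRingEnd ℂ) (W i i) * ((x i : ℝ) : ℂ) ^ 2)
          = (‖∑ i, (starRingEnd ℂ) (W i i) * ((x i : ℝ) : ℂ) ^ 2‖) ^ 2 := by
            rw [Complex.sq_norm]
        _ ≤ (∑ i, ‖W i i‖ * (x i) ^ 2) ^ 2 :=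
            pow_le_pow_left₀ (norm_nonneg _) habs 2
        _ = (∑ i, x i * (‖W i i‖ * x i)) ^ 2 := by rw [heq1]
        _ ≤ (∑ i, (x i) ^ 2) * ∑ i, (‖W i i‖ * x i) ^ 2 := hcs
        _ = (1 + t) * ∑ i, Complex.normSq (W i i) * (x i) ^ 2 := by rw [hsum, heq2]
    -- tail estimate
    have htail : ∑ m ∈ Finset.univ.erase (0 : Fin d),
          (x m) ^ 2 * (1 - (x m) ^ 2) * Complex.normSq (W m 0)
        ≤ (1 + t) * ∑ i, ((x i) ^ 2 - Complex.normSq (W i i) * (x i) ^ 2) := by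
      have hterm : ∀ m ∈ Finset.univ.erase (0 : Fin d),
          (x m) ^ 2 * (1 - (x m) ^ 2) * Complex.normSq (W m 0)
          ≤ (1 + t) * ((x m) ^ 2 - Complex.normSq (W m m) * (x m) ^ 2) := by
        intro m hm
        have hm0 : m ≠ 0 := (Finset.mem_erase.mp hm).1
        have h1 := (hx m hm0).1
        have h2 := (hx m hm0).2
        have h3 := hpair m hm0
        have h4 := Complex.normSq_nonneg (W m 0)
        have h5 := Complex.normSq_nonneg (W m m)
        have hB1 : Complex.normSq (W m 0) ≤ 1 - Complex.normSq (W m m) := by linarith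
        have step1 : x m ^ 2 * (1 - x m ^ 2) * Complex.normSq (W m 0)
            ≤ x m ^ 2 * Complex.normSq (W m 0) := by
          nlinarith [mul_nonneg (mul_nonneg (sq_nonneg (x m)) h4) (sq_nonneg (x m))]
        have step2 : x m ^ 2 * Complex.normSq (W m 0)
            ≤ x m ^ 2 * (1 - Complex.normSq (W m m)) :=
          mul_le_mul_of_nonneg_left hB1 (sq_nonneg _)
        have step3 : x m ^ 2 * (1 - Complex.normSq (W m m))
            ≤ (1 + t) * (x m ^ 2 * (1 - Complex.normSq (W m m))) :=
          le_mul_of_one_le_left (mul_nonneg (sq_nonneg _) (by linarith)) (by linarith)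
        have heq : (1 + t) * (x m ^ 2 - Complex.normSq (W m m) * x m ^ 2)
            = (1 + t) * (x m ^ 2 * (1 - Complex.normSq (W m m))) := by ring
        linarith
      calc ∑ m ∈ Finset.univ.erase (0 : Fin d),
            (x m) ^ 2 * (1 - (x m) ^ 2) * Complex.normSq (W m 0)
          ≤ ∑ m ∈ Finset.univ.erase (0 : Fin d),
              (1 + t) * ((x m) ^ 2 - Complex.normSq (W m m) * (x m) ^ 2) :=
            Finset.sum_le_sum hterm
        _ ≤ ∑ i, (1 + t) * ((x i) ^ 2 - Complex.normSq (W i i) * (x i) ^ 2) := by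
            refine Finset.sum_le_sum_of_subset_of_nonneg (Finset.subset_univ _)
              (fun i _ _ => ?_)
            have h6 : 0 ≤ x i ^ 2 * (1 - Complex.normSq (W i i)) :=
              mul_nonneg (sq_nonneg _) (by linarith [hA1 i])
            nlinarith [mul_nonneg hs0.le h6]
        _ = (1 + t) * ∑ i, ((x i) ^ 2 - Complex.normSq (W i i) * (x i) ^ 2) := by
            rw [Finset.mul_sum]
    have hfin : Complex.normSq (∑ i, (starRingEnd ℂ) (W i i) * ((x i : ℝ) : ℂ) ^ 2)
        + ∑ m ∈ Finset.univ.erase (0 : Fin d),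
            (x m) ^ 2 * (1 - (x m) ^ 2) * Complex.normSq (W m 0)
        ≤ (1 + t) * (1 + t) := by
      have hsplit : ∑ i, ((x i) ^ 2 - Complex.normSq (W i i) * (x i) ^ 2)
          = (1 + t) - ∑ i, Complex.normSq (W i i) * (x i) ^ 2 := by
        rw [Finset.sum_sub_distrib, hsum]
      rw [hsplit] at htail
      nlinarith [hNS, htail]
    rw [div_le_div_iff₀ (by positivity) hd0]
    nlinarith [hfin, hd0.le]
end
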